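/- Let P be a symmetric positive definite 6×6 real matrix with Q = P⁻¹, and let α > 0 satisfy the LMI Q Aᵀ + A Q − 2 B Bᵀ ⪯ −α Q. Suppose ρ > 0 is such that the closed Euclidean ball {v ∈ ℝ³ : ‖v‖₂² ≤ ρ} is contained in V_c, and ε > 0 is such that for every ξ ∈ ℝ⁶, ξᵀPξ ≤ ε implies ‖BᵀPξ‖₂² ≤ ρ. Fix γ ≥ 1 and let ξ : [0,∞) → ℝ⁶ be a differentiable function satisfying ξ'(t) = A ξ(t) + B·sat(−γ BᵀP ξ(t)) for all t ≥ 0, with ξ(0)ᵀPξ(0) ≤ ε. Then for all t ≥ 0, ξ(t)ᵀPξ(t) ≤ ε and ξ(t)ᵀPξ(t) ≤ e^{−αt}·ξ(0)ᵀPξ(0); in particular the ellipsoid E = {ξ : ξᵀPξ ≤ ε} is invariant and the state converges exponentially to the origin from within E. -/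

import Mathlib

open Matrix Set

noncomputable section

/-- The convex input-constraint set `V_c` in the flat output space. -/
def Vc (g Tmax εmax : ℝ) : Set (Fin 3 → ℝ) :=
  {v | (v 0) ^ 2 + (v 1) ^ 2 + (v 2 + g) ^ 2 ≤ Tmax ^ 2 ∧
       (v 0) ^ 2 + (v 1) ^ 2 ≤ (Real.tan εmax) ^ 2 * (v 2 + g) ^ 2 ∧
       -g ≤ v 2}

/-- Saturation factor `λ*(w) = sup {λ ∈ (0,1] : λ w ∈ K}`. -/
def lamStar (K : Set (Fin 3 → ℝ)) (w : Fin 3 → ℝ) : ℝ :=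
  sSup {l : ℝ | l ∈ Set.Ioc (0 : ℝ) 1 ∧ l • w ∈ K}

/-- Saturated vector `sat(w) = λ*(w) w`. -/
def sat (K : Set (Fin 3 → ℝ)) (w : Fin 3 → ℝ) : Fin 3 → ℝ :=
  lamStar K w • w

/-- Quadcopter state matrix `A = [[0,I],[0,0]]`. -/
def quadA : Matrix (Fin 3 ⊕ Fin 3) (Fin 3 ⊕ Fin 3) ℝ :=
  Matrix.fromBlocks 0 1 0 0

/-- Quadcopter input matrix `B = [0; I]`. -/
def quadB : Matrix (Fin 3 ⊕ Fin 3) (Fin 3) ℝ :=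
  Matrix.of (Sum.elim (fun _ _ => (0 : ℝ)) (fun i j => if i = j then 1 else 0))

/- ---------- auxiliary lemmas ---------- -/

lemma hasDerivAt_dot {n : Type*} [Fintype n] {f g : ℝ → n → ℝ} {f' g' : n → ℝ} {t : ℝ}
    (hf : HasDerivAt f f' t) (hg : HasDerivAt g g' t) :
    HasDerivAt (fun s => f s ⬝ᵥ g s) (f' ⬝ᵥ g t + f t ⬝ᵥ g') t := by
  have h : ∀ i ∈ Finset.univ, HasDerivAt (fun s => f s i * g s i)
      (f' i * g t i + f t i * g' i) t :=
    fun i _ => (hasDerivAt_pi.1 hf i).mul (hasDerivAt_pi.1 hg i)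
  simpa [dotProduct, Finset.sum_add_distrib] using HasDerivAt.fun_sum h

lemma hasDerivAt_mulVec {n m : Type*} [Fintype n] [Fintype m]
    (M : Matrix m n ℝ) {f : ℝ → n → ℝ} {f' : n → ℝ} {t : ℝ} (hf : HasDerivAt f f' t) :
    HasDerivAt (fun s => M *ᵥ f s) (M *ᵥ f') t := by
  rw [hasDerivAt_pi]
  intro i
  have h : ∀ j ∈ Finset.univ, HasDerivAt (fun s => M i j * f s j) (M i j * f' j) t :=
    fun j _ => (hasDerivAt_pi.1 hf j).const_mul (M i j)
  simpa [Matrix.mulVec, dotProduct] using HasDerivAt.fun_sum h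

lemma dot_symm_mulVec {n : Type*} [Fintype n] {S : Matrix n n ℝ} (hS : S.IsSymm)
    (u v : n → ℝ) : u ⬝ᵥ (S *ᵥ v) = (S *ᵥ u) ⬝ᵥ v := by
  rw [dotProduct_mulVec]; nth_rewrite 1 [← hS]; rw [vecMul_transpose]

lemma dot_mul_mulVec {n m : Type*} [Fintype n] [Fintype m] (B : Matrix n m ℝ)
    (u : n → ℝ) (v : m → ℝ) : u ⬝ᵥ (B *ᵥ v) = (Bᵀ *ᵥ u) ⬝ᵥ v := by
  rw [dotProduct_mulVec, mulVec_transpose]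

lemma lmi_transfer {n m : Type*} [Fintype n] [DecidableEq n] [Fintype m]
    {P Q A : Matrix n n ℝ} {B : Matrix n m ℝ} {α : ℝ}
    (hPsym : P.IsSymm) (hP : P.PosDef) (hQ : Q = P⁻¹)
    (hLMI : (-(α • Q) - (Q * Aᵀ + A * Q - (2 : ℝ) • (B * Bᵀ))).PosSemidef)
    (x : n → ℝ) :
    2 * ((P *ᵥ x) ⬝ᵥ (A *ᵥ x)) ≤
      -α * (x ⬝ᵥ (P *ᵥ x)) + 2 * ((Bᵀ *ᵥ (P *ᵥ x)) ⬝ᵥ (Bᵀ *ᵥ (P *ᵥ x))) := by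
  have hQsym : Q.IsSymm := by
    rw [hQ, Matrix.IsSymm, Matrix.transpose_nonsing_inv, hPsym.eq]
  have hQP : Q * P = 1 := by
    rw [hQ]; exact Matrix.nonsing_inv_mul P (isUnit_iff_ne_zero.mpr hP.det_pos.ne')
  set y := P *ᵥ x with hy
  have hQy : Q *ᵥ y = x := by
    rw [hy, Matrix.mulVec_mulVec, hQP, Matrix.one_mulVec]
  have h := hLMI.dotProduct_mulVec_nonneg y
  rw [star_trivial] at h
  have hexp : y ⬝ᵥ ((-(α • Q) - (Q * Aᵀ + A * Q - (2 : ℝ) • (B * Bᵀ))) *ᵥ y)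
      = -α * (x ⬝ᵥ (P *ᵥ x)) - 2 * ((P *ᵥ x) ⬝ᵥ (A *ᵥ x))
        + 2 * ((Bᵀ *ᵥ (P *ᵥ x)) ⬝ᵥ (Bᵀ *ᵥ (P *ᵥ x))) := by
    have e1 : y ⬝ᵥ (Q *ᵥ y) = x ⬝ᵥ (P *ᵥ x) := by
      rw [dot_symm_mulVec hQsym, hQy, dotProduct_comm]
    have e2 : y ⬝ᵥ ((Q * Aᵀ) *ᵥ y) = (P *ᵥ x) ⬝ᵥ (A *ᵥ x) := by
      rw [← Matrix.mulVec_mulVec, dot_symm_mulVec hQsym, hQy,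
        dot_mul_mulVec Aᵀ, Matrix.transpose_transpose, dotProduct_comm]
    have e3 : y ⬝ᵥ ((A * Q) *ᵥ y) = (P *ᵥ x) ⬝ᵥ (A *ᵥ x) := by
      rw [← Matrix.mulVec_mulVec, dot_mul_mulVec A, hQy, dotProduct_comm,
        dot_mul_mulVec Aᵀ, Matrix.transpose_transpose, dotProduct_comm]
    have e4 : y ⬝ᵥ ((B * Bᵀ) *ᵥ y) = (Bᵀ *ᵥ (P *ᵥ x)) ⬝ᵥ (Bᵀ *ᵥ (P *ᵥ x)) := by
      rw [← Matrix.mulVec_mulVec, dot_mul_mulVec B]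
    simp only [Matrix.sub_mulVec, Matrix.add_mulVec, Matrix.neg_mulVec,
      Matrix.smul_mulVec, dotProduct_sub, dotProduct_add, dotProduct_neg,
      dotProduct_smul, smul_eq_mul, e1, e2, e3, e4]
    ring
  rw [hexp] at h
  linarith

lemma sat_eq (K : Set (Fin 3 → ℝ)) (γ : ℝ) (hγ : 1 ≤ γ) (u : Fin 3 → ℝ)
    (hmem : -u ∈ K) : ∃ μ : ℝ, 1 ≤ μ ∧ sat K (-(γ • u)) = (-μ) • u := by
  have hγ0 : (0:ℝ) < γ := lt_of_lt_of_le one_pos hγ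
  have hmemS : γ⁻¹ ∈ {l : ℝ | l ∈ Set.Ioc (0 : ℝ) 1 ∧ l • (-(γ • u)) ∈ K} := by
    constructor
    · exact ⟨inv_pos.mpr hγ0, inv_le_one_of_one_le₀ hγ⟩
    · have : γ⁻¹ • (-(γ • u)) = -u := by
        rw [smul_neg, smul_smul, inv_mul_cancel₀ hγ0.ne']; simp
      rw [this]; exact hmem
  have hbdd : BddAbove {l : ℝ | l ∈ Set.Ioc (0 : ℝ) 1 ∧ l • (-(γ • u)) ∈ K} :=
    ⟨1, fun l hl => hl.1.2⟩
  have hge : γ⁻¹ ≤ lamStar K (-(γ • u)) := le_csSup hbdd hmemS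
  refine ⟨lamStar K (-(γ • u)) * γ, ?_, ?_⟩
  · calc (1:ℝ) = γ⁻¹ * γ := by rw [inv_mul_cancel₀ hγ0.ne']
    _ ≤ lamStar K (-(γ • u)) * γ := mul_le_mul_of_nonneg_right hge hγ0.le
  · rw [sat, smul_neg, smul_smul]
    ext i; simp [neg_smul]

lemma dot_self_nonneg {n : Type*} [Fintype n] (v : n → ℝ) : 0 ≤ v ⬝ᵥ v :=
  Finset.sum_nonneg fun i _ => mul_self_nonneg _

theorem stmt0
    (g Tmax εmax : ℝ) (hg : 0 < g) (hT : 0 < Tmax) (hεmax : εmax ∈ Set.Ioo 0 (Real.pi / 2))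
    (P : Matrix (Fin 3 ⊕ Fin 3) (Fin 3 ⊕ Fin 3) ℝ) (hPsym : P.IsSymm) (hP : P.PosDef)
    (Q : Matrix (Fin 3 ⊕ Fin 3) (Fin 3 ⊕ Fin 3) ℝ) (hQ : Q = P⁻¹)
    (α : ℝ) (hα : 0 < α)
    (hLMI : (-(α • Q) - (Q * quadAᵀ + quadA * Q - (2 : ℝ) • (quadB * quadBᵀ))).PosSemidef)
    (ρ : ℝ) (hρ : 0 < ρ)
    (hball : {v : Fin 3 → ℝ | v ⬝ᵥ v ≤ ρ} ⊆ Vc g Tmax εmax)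
    (ε : ℝ) (hε : 0 < ε)
    (himpl : ∀ ξ : Fin 3 ⊕ Fin 3 → ℝ, ξ ⬝ᵥ (P *ᵥ ξ) ≤ ε →
      (quadBᵀ *ᵥ (P *ᵥ ξ)) ⬝ᵥ (quadBᵀ *ᵥ (P *ᵥ ξ)) ≤ ρ)
    (γ : ℝ) (hγ : 1 ≤ γ)
    (ξ : ℝ → (Fin 3 ⊕ Fin 3 → ℝ))
    (hdyn : ∀ t ≥ (0 : ℝ), HasDerivAt ξ
      (quadA *ᵥ ξ t + quadB *ᵥ sat (Vc g Tmax εmax) (-(γ • (quadBᵀ *ᵥ (P *ᵥ ξ t))))) t)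
    (h0 : ξ 0 ⬝ᵥ (P *ᵥ ξ 0) ≤ ε) :
    ∀ t ≥ (0 : ℝ),
      ξ t ⬝ᵥ (P *ᵥ ξ t) ≤ ε ∧
      ξ t ⬝ᵥ (P *ᵥ ξ t) ≤ Real.exp (-α * t) * (ξ 0 ⬝ᵥ (P *ᵥ ξ 0)) := by
  set V : ℝ → ℝ := fun t => ξ t ⬝ᵥ (P *ᵥ ξ t) with hV
  set D : ℝ → ℝ := fun t => 2 * ((P *ᵥ ξ t) ⬝ᵥ
    (quadA *ᵥ ξ t + quadB *ᵥ sat (Vc g Tmax εmax) (-(γ • (quadBᵀ *ᵥ (P *ᵥ ξ t)))))) with hD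
  -- derivative of V
  have hVd : ∀ t ≥ (0:ℝ), HasDerivAt V (D t) t := by
    intro t ht
    have hf := hdyn t ht
    have h1 := hasDerivAt_dot hf (hasDerivAt_mulVec P hf)
    convert h1 using 1
    set z := quadA *ᵥ ξ t + quadB *ᵥ sat (Vc g Tmax εmax) (-(γ • (quadBᵀ *ᵥ (P *ᵥ ξ t)))) with hz
    show 2 * ((P *ᵥ ξ t) ⬝ᵥ z) = z ⬝ᵥ (P *ᵥ ξ t) + ξ t ⬝ᵥ (P *ᵥ z)
    rw [dotProduct_comm z (P *ᵥ ξ t), dot_symm_mulVec hPsym (ξ t) z]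
    ring
  -- bound on the derivative when inside the ellipsoid
  have hbound : ∀ t ≥ (0:ℝ), V t ≤ ε → D t ≤ -α * V t := by
    intro t ht hVε
    set u := quadBᵀ *ᵥ (P *ᵥ ξ t) with hu
    have huρ : u ⬝ᵥ u ≤ ρ := himpl (ξ t) hVε
    have hmem : -u ∈ Vc g Tmax εmax := by
      apply hball
      simp only [Set.mem_setOf_eq, neg_dotProduct, dotProduct_neg, neg_neg]
      exact huρ
    obtain ⟨μ, hμ, hsat⟩ := sat_eq (Vc g Tmax εmax) γ hγ u hmem
    have hlin := lmi_transfer hPsym hP hQ hLMI (ξ t)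
    have hDval : D t = 2 * ((P *ᵥ ξ t) ⬝ᵥ (quadA *ᵥ ξ t)) + 2 * (-μ * (u ⬝ᵥ u)) := by
      have hrfl : D t = 2 * ((P *ᵥ ξ t) ⬝ᵥ
          (quadA *ᵥ ξ t + quadB *ᵥ sat (Vc g Tmax εmax) (-(γ • u)))) := rfl
      rw [hrfl, hsat, dotProduct_add, dot_mul_mulVec quadB, ← hu, dotProduct_smul, smul_eq_mul]
      ring
    have h0u : 0 ≤ u ⬝ᵥ u := dot_self_nonneg u
    rw [hDval]
    have : (1 - μ) * (u ⬝ᵥ u) ≤ 0 := mul_nonpos_of_nonpos_of_nonneg (by linarith) h0u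
    rw [hu] at *
    nlinarith [hlin]
  -- continuity of V on [0,∞)
  have hVcont : ∀ t ≥ (0:ℝ), ContinuousAt V t := fun t ht => (hVd t ht).continuousAt
  -- Step A: invariance of the ellipsoid
  have hinv : ∀ t ≥ (0:ℝ), V t ≤ ε := by
    by_contra hc
    push_neg at hc
    obtain ⟨t₀, ht₀, hVt₀⟩ := hc
    set S : Set ℝ := {t : ℝ | 0 ≤ t ∧ ε < V t} with hSdef
    have hne : S.Nonempty := ⟨t₀, ht₀, hVt₀⟩
    have hbd : BddBelow S := ⟨0, fun s hs => hs.1⟩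
    set t₁ := sInf S with ht₁def
    have ht₁0 : 0 ≤ t₁ := le_csInf hne fun s hs => hs.1
    have hbelow : ∀ s, 0 ≤ s → s < t₁ → V s ≤ ε := by
      intro s hs hlt
      by_contra hcs
      exact absurd (csInf_le hbd ⟨hs, not_le.mp hcs⟩) (not_le.mpr hlt)
    have hVt₁ : V t₁ ≤ ε := by
      rcases eq_or_lt_of_le ht₁0 with h | h
      · rw [← h]; exact h0
      · refine le_of_tendsto (((hVcont t₁ ht₁0).tendsto).mono_left nhdsWithin_le_nhds : 
          Filter.Tendsto V (nhdsWithin t₁ (Set.Iio t₁)) (nhds (V t₁))) ?_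
        filter_upwards [Ioo_mem_nhdsLT h]
          with s hs
        exact hbelow s hs.1.le hs.2
    have ht₁S : t₁ ∉ S := fun hcS => absurd hVt₁ (not_le.mpr hcS.2)
    have hd := hVd t₁ ht₁0
    have hdle := hbound t₁ ht₁0 hVt₁
    -- eventually V < ε just to the right of t₁
    have hsmall : ∀ᶠ s in nhdsWithin t₁ (Set.Ioi t₁), V s < ε := by
      rcases lt_or_eq_of_le hVt₁ with h | h
      · exact ((hVcont t₁ ht₁0).tendsto.eventually_lt_const h).filter_mono
          nhdsWithin_le_nhds
      · have hdneg : D t₁ < 0 := lt_of_le_of_lt hdle (by nlinarith)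
        have hslope := hasDerivAt_iff_tendsto_slope.1 hd
        have hev : ∀ᶠ s in nhdsWithin t₁ {t₁}ᶜ, slope V t₁ s < 0 :=
          hslope.eventually_lt_const hdneg
        have hmono : nhdsWithin t₁ (Set.Ioi t₁) ≤ nhdsWithin t₁ {t₁}ᶜ :=
          nhdsWithin_mono t₁ fun s hs => (ne_of_gt hs : s ≠ t₁)
        filter_upwards [hev.filter_mono hmono, self_mem_nhdsWithin] with s hslt hsmem
        have hst : t₁ < s := hsmem
        have hVslt : V s - V t₁ < 0 := by
          by_contra hge
          push_neg at hge
          have : (0:ℝ) ≤ slope V t₁ s := by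
            rw [slope_def_field]
            exact div_nonneg hge (by linarith)
          linarith
        linarith [hVslt, h ▸ hVslt]
    rw [eventually_nhdsWithin_iff] at hsmall
    rw [Metric.eventually_nhds_iff] at hsmall
    obtain ⟨δ, hδ, hδprop⟩ := hsmall
    have hlt : sInf S < t₁ + δ := by rw [← ht₁def]; linarith
    obtain ⟨s, hsS, hslt⟩ := (csInf_lt_iff hbd hne).mp hlt
    have hst₁ : t₁ ≤ s := csInf_le hbd hsS
    have hsne : t₁ < s := lt_of_le_of_ne hst₁ (fun he => ht₁S (he ▸ hsS))
    have : V s < ε := by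
      apply hδprop (show dist s t₁ < δ by rw [Real.dist_eq, abs_of_nonneg (by linarith)]; linarith)
      exact hsne
    exact absurd hsS.2 (not_lt.mpr this.le)
  -- Step B: exponential decay via the auxiliary function W
  set W : ℝ → ℝ := fun t => Real.exp (α * t) * V t with hW
  have hWd : ∀ t ≥ (0:ℝ), HasDerivAt W (Real.exp (α * t) * α * V t + Real.exp (α * t) * D t) t := by
    intro t ht
    have he : HasDerivAt (fun s : ℝ => Real.exp (α * s)) (Real.exp (α * t) * α) t := by
      have h1 : HasDerivAt (fun s : ℝ => α * s) α t := by
        simpa using (hasDerivAt_id t).const_mul α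
      simpa using h1.exp
    exact he.mul (hVd t ht)
  have hanti : AntitoneOn W (Set.Ici 0) := by
    apply antitoneOn_of_deriv_nonpos (convex_Ici 0)
    · exact fun t ht => (hWd t ht).continuousAt.continuousWithinAt
    · intro t ht
      rw [interior_Ici] at ht
      exact (hWd t (le_of_lt ht)).differentiableAt.differentiableWithinAt
    · intro t ht
      rw [interior_Ici] at ht
      rw [(hWd t (le_of_lt ht)).deriv]
      have hb := hbound t (le_of_lt ht) (hinv t (le_of_lt ht))
      have hep := (Real.exp_pos (α * t)).le
      nlinarith [mul_le_mul_of_nonneg_left hb hep]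
  intro t ht
  refine ⟨hinv t ht, ?_⟩
  have hA : W t ≤ W 0 := hanti (Set.self_mem_Ici) ht ht
  have hW0 : W 0 = V 0 := by rw [hW]; simp
  rw [hW0] at hA
  have hp := Real.exp_pos (α * t)
  rw [neg_mul, Real.exp_neg]
  rw [ge_iff_le] at ht
  calc (ξ t ⬝ᵥ (P *ᵥ ξ t) : ℝ) = V t := rfl
    _ ≤ (Real.exp (α * t))⁻¹ * V 0 := by
        rw [inv_mul_eq_div, le_div_iff₀ hp]
        calc V t * Real.exp (α * t) = W t := by rw [hW]; ring
          _ ≤ V 0 := hA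
    _ = (Real.exp (α * t))⁻¹ * (ξ 0 ⬝ᵥ (P *ᵥ ξ 0)) := rfl
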